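/- Let w₁,…,w_m be vectors over a field K of the form w_i = Σ_{k=0}^{l_i} u_{ik} β_{ik}, where the β_{ik} are fixed vectors in Kⁿ (with β_{i0} = 0 for each i) and the u_{ik} are algebraically independent indeterminates over K. Let M be the m×n matrix with rows w₁,…,w_m over the field K(u_{ik}). For each choice k₁,…,k_m with 1 ≤ k_i ≤ l_i, let M_{k₁,…,k_m} be the m×n matrix with rows β_{1k₁},…,β_{mk_m}. Then rank(M) = max over all choices (k₁,…,k_m) of rank(M_{k₁,…,k_m}). -/

import Mathlib

open MvPolynomial Submodule Module Matrix

section RankMinor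

variable {F : Type*} [Field F]

lemma aux_exists_inj {V ι : Type*} [AddCommGroup V] [Module F V] [FiniteDimensional F V]
    [Fintype ι] (v : ι → V) (r : ℕ)
    (hr : finrank F (span F (Set.range v)) = r) :
    ∃ g : Fin r → ι, Function.Injective g ∧ LinearIndependent F (v ∘ g) := by
  obtain ⟨s, hst, hspan, hind⟩ := exists_linearIndependent F (Set.range v)
  haveI : Finite s := hind.finite
  haveI : Fintype s := Fintype.ofFinite s
  have hcard : Fintype.card s = r := by
    have h1 := finrank_span_set_eq_card hind
    rw [hspan, hr] at h1
    rw [h1, Set.toFinset_card]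
  let e : Fin r ≃ s := (Fintype.equivFinOfCardEq hcard).symm
  have hmem : ∀ k : Fin r, ((e k : V) ∈ Set.range v) := fun k => hst (e k).2
  classical
  choose g hg using fun k => hmem k
  refine ⟨g, ?_, ?_⟩
  · intro a b hab
    have : (e a : V) = (e b : V) := by rw [← hg a, ← hg b, hab]
    exact e.injective (Subtype.ext this)
  · have : v ∘ g = (Subtype.val : s → V) ∘ e := funext fun k => hg k
    rw [this]
    exact hind.comp e e.injective

lemma aux_rank_submatrix_le {m' n' r' s' : Type*} [Fintype m'] [Fintype n'] [Fintype r']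
    [Fintype s'] (A : Matrix m' n' F) (f : r' → m') (g : s' → n') :
    (A.submatrix f g).rank ≤ A.rank := by
  rw [Matrix.rank_eq_finrank_span_cols, Matrix.rank_eq_finrank_span_cols]
  have hsub : Set.range (A.submatrix f g)ᵀ ⊆
      (LinearMap.funLeft F F f) '' (Set.range Aᵀ) := by
    rintro - ⟨j, rfl⟩
    exact ⟨Aᵀ (g j), ⟨g j, rfl⟩, rfl⟩
  calc finrank F (span F (Set.range (A.submatrix f g)ᵀ))
      ≤ finrank F (Submodule.map (LinearMap.funLeft F F f) (span F (Set.range Aᵀ))) := by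
        apply Submodule.finrank_mono
        rw [span_le]
        intro x hx
        obtain ⟨y, hy, rfl⟩ := hsub hx
        exact Submodule.mem_map_of_mem (subset_span hy)
    _ ≤ finrank F (span F (Set.range Aᵀ)) := Submodule.finrank_map_le _ _

lemma aux_le_rank {m' n' : Type*} [Fintype m'] [Fintype n'] [DecidableEq m'] [DecidableEq n']
    (A : Matrix m' n' F) (r : ℕ) (f : Fin r → m') (g : Fin r → n')
    (hdet : (A.submatrix f g).det ≠ 0) : r ≤ A.rank := by
  have hu : IsUnit (A.submatrix f g) :=
    (Matrix.isUnit_iff_isUnit_det _).mpr (isUnit_iff_ne_zero.mpr hdet)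
  have := Matrix.rank_of_isUnit _ hu
  calc r = Fintype.card (Fin r) := (Fintype.card_fin r).symm
    _ = (A.submatrix f g).rank := this.symm
    _ ≤ A.rank := aux_rank_submatrix_le A f g

lemma aux_exists_submatrix {m' n' : Type*} [Fintype m'] [Fintype n'] [DecidableEq m']
    [DecidableEq n'] (A : Matrix m' n' F) :
    ∃ f : Fin A.rank → m', ∃ g : Fin A.rank → n',
      Function.Injective f ∧ Function.Injective g ∧ (A.submatrix f g).det ≠ 0 := by
  obtain ⟨g, hginj, hgind⟩ := aux_exists_inj (fun j => Aᵀ j) A.rank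
    (Matrix.rank_eq_finrank_span_cols A).symm
  set B : Matrix m' (Fin A.rank) F := A.submatrix id g with hB
  have hBT : Bᵀ = fun j => Aᵀ (g j) := by
    funext j i; rfl
  have hrankB : B.rank = A.rank := by
    rw [Matrix.rank_eq_finrank_span_cols, show B.col = Bᵀ from rfl, hBT]
    rw [show (fun j => Aᵀ (g j)) = ((fun j => Aᵀ j) ∘ g) from rfl, finrank_span_eq_card hgind,
      Fintype.card_fin]
  have hrankBT : Bᵀ.rank = A.rank := by rw [Matrix.rank_transpose, hrankB]
  obtain ⟨f, hfinj, hfind⟩ := aux_exists_inj (fun i => B i) A.rank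
    (by rw [← Matrix.transpose_transpose B] at hrankBT ⊢
        exact (Matrix.rank_eq_finrank_span_cols _).symm.trans hrankBT)
  refine ⟨f, g, hfinj, hginj, ?_⟩
  have : LinearIndependent F (fun j => (A.submatrix f g) j) := hfind
  have hu : IsUnit (A.submatrix f g) := Matrix.linearIndependent_rows_iff_isUnit.mp this
  exact fun h => by
    have := (Matrix.isUnit_iff_isUnit_det _).mp hu
    rw [h] at this
    exact not_isUnit_zero this

end RankMinor

lemma aux_prod_monomial {R σ ι : Type*} [CommSemiring R] (s : Finset ι) (e : ι → (σ →₀ ℕ)) :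
    ∏ j ∈ s, monomial (e j) (1 : R) = monomial (∑ j ∈ s, e j) 1 := by
  classical
  induction s using Finset.induction_on with
  | empty => simp
  | insert _ _ h ih => rw [Finset.prod_insert h, Finset.sum_insert h, ih, monomial_mul, one_mul]

lemma aux_det_expand (K : Type*) [Field K] (m n : ℕ) (l : Fin m → ℕ)
    (β : (i : Fin m) → Fin (l i + 1) → (Fin n → K)) (r : ℕ) (fr : Fin r → Fin m)
    (gc : Fin r → Fin n) :
    (Matrix.of fun (j j' : Fin r) =>
        algebraMap (MvPolynomial ((i : Fin m) × Fin (l i + 1)) K)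
          (FractionRing (MvPolynomial ((i : Fin m) × Fin (l i + 1)) K))
          (∑ k : Fin (l (fr j) + 1), X ⟨fr j, k⟩ * C (β (fr j) k (gc j')))).det
      = algebraMap (MvPolynomial ((i : Fin m) × Fin (l i + 1)) K)
          (FractionRing (MvPolynomial ((i : Fin m) × Fin (l i + 1)) K))
          (∑ kk : ((j : Fin r) → Fin (l (fr j) + 1)),
            monomial (∑ j, Finsupp.single (⟨fr j, kk j⟩ : (i : Fin m) × Fin (l i + 1)) 1)
              ((Matrix.of fun j j' => β (fr j) (kk j) (gc j')).det)) := by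
  classical
  set P := MvPolynomial ((i : Fin m) × Fin (l i + 1)) K
  set L := FractionRing P
  set φ : P →+* L := (algebraMap P L : P →+* L) with hφ
  have h1 : (Matrix.of fun (j j' : Fin r) =>
      φ (∑ k : Fin (l (fr j) + 1), X ⟨fr j, k⟩ * C (β (fr j) k (gc j'))))
      = fun (j : Fin r) => ∑ k : Fin (l (fr j) + 1),
          φ (X (⟨fr j, k⟩ : (i : Fin m) × Fin (l i + 1))) •
            (fun j' => φ (C (β (fr j) k (gc j')))) := by
    funext j j'
    simp [Finset.sum_apply, map_sum, _root_.map_mul, smul_eq_mul]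
  rw [show ∀ (M : Matrix (Fin r) (Fin r) L), M.det = Matrix.detRowAlternating M
    from fun _ => rfl]
  rw [h1]
  refine Eq.trans ((Matrix.detRowAlternating :
      (Fin r → L) [⋀^Fin r]→ₗ[L] L).toMultilinearMap.map_sum
      (g := fun j k => φ (X (⟨fr j, k⟩ : (i : Fin m) × Fin (l i + 1))) •
        (fun j' => φ (C (β (fr j) k (gc j')))))) ?_
  rw [map_sum φ]
  congr 1
  funext kk
  have h2 : ((Matrix.detRowAlternating : (Fin r → L) [⋀^Fin r]→ₗ[L] L).toMultilinearMap
      (fun j => fun j' => φ (C (β (fr j) (kk j) (gc j')))))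
      = φ (C ((Matrix.of fun j j' => β (fr j) (kk j) (gc j')).det)) :=
    ((φ.comp (C : K →+* P)).map_det (Matrix.of fun j j' => β (fr j) (kk j) (gc j'))).symm
  rw [(Matrix.detRowAlternating :
    (Fin r → L) [⋀^Fin r]→ₗ[L] L).toMultilinearMap.map_smul_univ, h2]
  rw [smul_eq_mul, ← map_prod φ, ← _root_.map_mul φ]
  congr 1
  have h3 : ∀ j : Fin r, (X (⟨fr j, kk j⟩ : (i : Fin m) × Fin (l i + 1)) : P)
      = monomial (Finsupp.single ⟨fr j, kk j⟩ 1) 1 := fun j => rfl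
  simp_rw [h3]
  rw [aux_prod_monomial]
  rw [C_apply, monomial_mul, add_zero, one_mul]

lemma aux_coeff_extract {K : Type*} [Field K] {m : ℕ} {l : Fin m → ℕ} {r : ℕ}
    {fr : Fin r → Fin m} (hfr : Function.Injective fr)
    (c : ((j : Fin r) → Fin (l (fr j) + 1)) → K)
    (k₀ : (j : Fin r) → Fin (l (fr j) + 1)) :
    MvPolynomial.coeff (∑ j, Finsupp.single (⟨fr j, k₀ j⟩ : (i : Fin m) × Fin (l i + 1)) 1)
      (∑ kk : ((j : Fin r) → Fin (l (fr j) + 1)),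
        monomial (∑ j, Finsupp.single (⟨fr j, kk j⟩ : (i : Fin m) × Fin (l i + 1)) 1) (c kk))
      = c k₀ := by
  classical
  have heval : ∀ (kk : (j : Fin r) → Fin (l (fr j) + 1)) (j₀ : Fin r)
      (a : Fin (l (fr j₀) + 1)),
      ((∑ j, Finsupp.single (⟨fr j, kk j⟩ : (i : Fin m) × Fin (l i + 1)) (1 : ℕ))
        (⟨fr j₀, a⟩ : (i : Fin m) × Fin (l i + 1))) = if kk j₀ = a then 1 else 0 := by
    intro kk j₀ a
    rw [Finsupp.finset_sum_apply, Finset.sum_eq_single j₀]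
    · simp [Finsupp.single_apply, Sigma.mk.inj_iff]
    · intro b _ hb
      rw [Finsupp.single_apply, if_neg]
      intro hc
      exact hb (hfr (congrArg Sigma.fst hc))
    · simp
  have hD : ∀ kk kk' : ((j : Fin r) → Fin (l (fr j) + 1)),
      (∑ j, Finsupp.single (⟨fr j, kk j⟩ : (i : Fin m) × Fin (l i + 1)) (1 : ℕ))
        = ∑ j, Finsupp.single (⟨fr j, kk' j⟩ : (i : Fin m) × Fin (l i + 1)) 1 → kk = kk' := by
    intro kk kk' h
    funext j₀
    have happ := DFunLike.congr_fun h (⟨fr j₀, kk' j₀⟩ : (i : Fin m) × Fin (l i + 1))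
    rw [heval, heval] at happ
    simp only [if_pos rfl] at happ
    by_contra hne
    rw [if_neg hne] at happ
    exact zero_ne_one happ
  rw [MvPolynomial.coeff_sum]
  simp_rw [MvPolynomial.coeff_monomial]
  rw [Finset.sum_eq_single k₀]
  · rw [if_pos rfl]
  · intro kk _ hkk
    rw [if_neg]
    intro h
    exact hkk (hD kk k₀ h)
  · simp



/-- **Symbolic support matrix rank.**  Let `β i k ∈ Kⁿ` (for `i < m`,
`0 ≤ k ≤ l i`, with `β i 0 = 0`) be fixed vectors and `u i k` algebraically
independent indeterminates over `K`.  Let `M` be the `m × n` matrix with rows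
`w i = ∑_k u i k • β i k`, with entries in the rational function field
`K(u i k)`.  Then `rank M` equals the maximum over all choices
`1 ≤ k_i ≤ l i` of the rank (over `K`) of the matrix with rows `β i (k i)`. -/
theorem stmt9 (K : Type*) [Field K] (m n : ℕ) (l : Fin m → ℕ) (hl : ∀ i, 1 ≤ l i)
    (β : (i : Fin m) → Fin (l i + 1) → (Fin n → K)) (hβ0 : ∀ i, β i 0 = 0) :
    (Matrix.of fun (i : Fin m) (t : Fin n) =>
        algebraMap (MvPolynomial ((i : Fin m) × Fin (l i + 1)) K)
          (FractionRing (MvPolynomial ((i : Fin m) × Fin (l i + 1)) K))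
          (∑ k : Fin (l i + 1), X ⟨i, k⟩ * C (β i k t))).rank =
      Finset.univ.sup (fun ks : ((i : Fin m) → Fin (l i)) =>
        (Matrix.of fun (i : Fin m) (t : Fin n) => β i ((ks i).succ) t).rank) := by
  classical
  have hφinj : Function.Injective (algebraMap (MvPolynomial ((i : Fin m) × Fin (l i + 1)) K)
      (FractionRing (MvPolynomial ((i : Fin m) × Fin (l i + 1)) K))) :=
    IsFractionRing.injective _ _
  set M : Matrix (Fin m) (Fin n) (FractionRing (MvPolynomial ((i : Fin m) × Fin (l i + 1)) K)) :=
    Matrix.of fun (i : Fin m) (t : Fin n) =>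
      algebraMap (MvPolynomial ((i : Fin m) × Fin (l i + 1)) K)
        (FractionRing (MvPolynomial ((i : Fin m) × Fin (l i + 1)) K))
        (∑ k : Fin (l i + 1), X ⟨i, k⟩ * C (β i k t)) with hM
  apply le_antisymm
  · obtain ⟨fr, gc, hfri, hgci, hdet⟩ := aux_exists_submatrix M
    have hsub : M.submatrix fr gc = Matrix.of fun (j j' : Fin M.rank) =>
        algebraMap (MvPolynomial ((i : Fin m) × Fin (l i + 1)) K)
          (FractionRing (MvPolynomial ((i : Fin m) × Fin (l i + 1)) K))
          (∑ k : Fin (l (fr j) + 1), X ⟨fr j, k⟩ * C (β (fr j) k (gc j'))) := by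
      ext j j'; rfl
    rw [hsub, aux_det_expand K m n l β M.rank fr gc] at hdet
    have hQ : (∑ kk : ((j : Fin M.rank) → Fin (l (fr j) + 1)),
        monomial (∑ j, Finsupp.single (⟨fr j, kk j⟩ : (i : Fin m) × Fin (l i + 1)) 1)
          ((Matrix.of fun j j' => β (fr j) (kk j) (gc j')).det)) ≠ 0 :=
      fun h => hdet (by rw [h, map_zero])
    have hex : ∃ kk : ((j : Fin M.rank) → Fin (l (fr j) + 1)),
        (Matrix.of fun j j' => β (fr j) (kk j) (gc j')).det ≠ 0 := by
      by_contra hcon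
      push_neg at hcon
      exact hQ (Finset.sum_eq_zero fun kk _ => by rw [hcon kk, monomial_zero])
    obtain ⟨kk, hkk⟩ := hex
    have hk0 : ∀ j, kk j ≠ 0 := by
      intro j hj
      apply hkk
      apply Matrix.det_eq_zero_of_row_eq_zero j
      intro j'
      show β (fr j) (kk j) (gc j') = 0
      rw [hj]
      exact congrFun (hβ0 (fr j)) (gc j')
    have hcast : ∀ {i : Fin m} (h : ∃ j, fr j = i), l (fr h.choose) + 1 = l i + 1 :=
      fun h => by rw [h.choose_spec]
    set ks : (i : Fin m) → Fin (l i) := fun i =>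
      if h : ∃ j, fr j = i then
        Fin.pred (Fin.cast (hcast h) (kk h.choose))
          (by have := hk0 h.choose; intro hc; apply this; rw [Fin.ext_iff, Fin.coe_cast, Fin.val_zero] at hc; rw [Fin.ext_iff, Fin.val_zero]; exact hc)
      else ⟨0, hl i⟩ with hks
    have hks' : ∀ j, (ks (fr j)).succ = kk j := by
      intro j
      have h : ∃ j', fr j' = fr j := ⟨j, rfl⟩
      have hcj : h.choose = j := hfri h.choose_spec
      simp only [hks, dif_pos h, Fin.succ_pred]
      apply Fin.ext
      rw [Fin.coe_cast]
      exact congrArg (fun t => ((kk t : Fin (l (fr t) + 1)) : ℕ)) hcj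
    have hsub2 : (Matrix.of fun (i : Fin m) (t : Fin n) =>
        β i ((ks i).succ) t).submatrix fr gc
        = Matrix.of fun j j' => β (fr j) (kk j) (gc j') := by
      ext j j'
      show β (fr j) ((ks (fr j)).succ) (gc j') = β (fr j) (kk j) (gc j')
      rw [hks' j]
    have hle := aux_le_rank (Matrix.of fun (i : Fin m) (t : Fin n) => β i ((ks i).succ) t)
      M.rank fr gc (by rw [hsub2]; exact hkk)
    exact hle.trans (Finset.le_sup (f := fun ks : ((i : Fin m) → Fin (l i)) =>
      (Matrix.of fun (i : Fin m) (t : Fin n) => β i ((ks i).succ) t).rank)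
      (Finset.mem_univ ks))
  · apply Finset.sup_le
    intro ks _
    obtain ⟨fr, gc, hfri, hgci, hdet⟩ :=
      aux_exists_submatrix (Matrix.of fun (i : Fin m) (t : Fin n) => β i ((ks i).succ) t)
    apply aux_le_rank M _ fr gc
    have hsub : M.submatrix fr gc = Matrix.of
        fun (j j' : Fin (Matrix.of fun (i : Fin m) (t : Fin n) => β i ((ks i).succ) t).rank) =>
        algebraMap (MvPolynomial ((i : Fin m) × Fin (l i + 1)) K)
          (FractionRing (MvPolynomial ((i : Fin m) × Fin (l i + 1)) K))
          (∑ k : Fin (l (fr j) + 1), X ⟨fr j, k⟩ * C (β (fr j) k (gc j'))) := by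
      ext j j'; rfl
    rw [hsub, aux_det_expand K m n l β _ fr gc]
    intro h0
    have hQ0 : (∑ kk : ((j : Fin (Matrix.of fun (i : Fin m) (t : Fin n) =>
          β i ((ks i).succ) t).rank) → Fin (l (fr j) + 1)),
        monomial (∑ j, Finsupp.single (⟨fr j, kk j⟩ : (i : Fin m) × Fin (l i + 1)) 1)
          ((Matrix.of fun j j' => β (fr j) (kk j) (gc j')).det)) = 0 :=
      hφinj (by rw [h0, map_zero])
    have hco := aux_coeff_extract hfri
      (fun kk => ((Matrix.of fun j j' => β (fr j) (kk j) (gc j')).det))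
      (fun j => (ks (fr j)).succ)
    rw [hQ0, MvPolynomial.coeff_zero] at hco
    apply hdet
    have : (Matrix.of fun (i : Fin m) (t : Fin n) => β i ((ks i).succ) t).submatrix fr gc
        = Matrix.of fun j j' => β (fr j) ((ks (fr j)).succ) (gc j') := by ext j j'; rfl
    rw [this]
    exact hco.symm
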